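/- Let α, β, k₀, k₁, k₂, k₃ be nonnegative integers with k₀ ≤ α and l := k₁ + k₂ + k₃ ≤ β. Then N(α,β;k₀,k₁,k₂,k₃) = 2^δ · [α choose k₀]₂ · [β; k₁,k₂,k₃]₂, where δ = k₀(β−l) + k₁(α−k₀+2(β−l)+k₃) + k₂((β−l)+(α−k₀)). -/

import Mathlib

open Finset

/-- The Mixed Generalized Gaussian Number `N(α,β;k₀,k₁,k₂,k₃)`. -/
def MGN (a b k₀ k₁ k₂ k₃ : ℕ) : ℚ :=
  ((∏ i ∈ range k₀, ((2 ^ a - 2 ^ i : ℚ) * 2 ^ b)) *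
   (∏ i ∈ range k₁, ((8 ^ b - 4 ^ b * 2 ^ i : ℚ) * 2 ^ a)) *
   (∏ i ∈ range k₂, ((4 ^ b - 2 ^ (b + k₁ + i) : ℚ) * 2 ^ a)) *
   (∏ i ∈ range k₃, (2 ^ b - 2 ^ (k₁ + k₂ + i) : ℚ))) /
  ((∏ i ∈ range k₀, (2 ^ (k₀ + k₁ + k₂ + k₃) - 2 ^ (k₁ + k₂ + k₃ + i) : ℚ)) *
   (∏ i ∈ range k₁, ((8 ^ k₁ - 4 ^ k₁ * 2 ^ i : ℚ) * 2 ^ (k₀ + 2 * k₂ + k₃))) *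
   (∏ i ∈ range k₂, ((4 ^ k₂ - 2 ^ (k₂ + i) : ℚ) * 2 ^ (k₀ + 2 * k₁ + k₃))) *
   (∏ i ∈ range k₃, (2 ^ (k₁ + k₂ + k₃) - 2 ^ (k₁ + k₂ + i) : ℚ)))

/-- The Gaussian (2-)binomial coefficient `[n choose k]₂`. -/
def gauss2 (n k : ℕ) : ℚ :=
  ∏ i ∈ range k, ((2 ^ (n - i) - 1) / (2 ^ (i + 1) - 1) : ℚ)

private lemma mgn_mulc (k c : ℕ) (f : ℕ → ℚ) :
    ∏ i ∈ range k, (f i * 2 ^ c) = 2 ^ (k * c) * ∏ i ∈ range k, f i := by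
  rw [Finset.prod_mul_distrib, Finset.prod_const, Finset.card_range, ← pow_mul,
    Nat.mul_comm c k, mul_comm]

private lemma mgn_master (k m : ℕ) (e f : ℕ → ℕ) (he : ∀ i < k, e i + f i = m) :
    ∏ i ∈ range k, ((2:ℚ) ^ m - 2 ^ (e i)) =
      2 ^ (∑ i ∈ range k, e i) * ∏ i ∈ range k, ((2:ℚ) ^ (f i) - 1) := by
  calc ∏ i ∈ range k, ((2:ℚ) ^ m - 2 ^ (e i))
      = ∏ i ∈ range k, ((2:ℚ) ^ (e i) * (2 ^ (f i) - 1)) :=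
        Finset.prod_congr rfl fun i hi => by
          rw [mul_sub, mul_one, ← pow_add, he i (Finset.mem_range.mp hi)]
    _ = _ := by rw [Finset.prod_mul_distrib, Finset.prod_pow_eq_pow_sum]

private lemma mgn_sum_shift (k c : ℕ) :
    ∑ i ∈ range k, (c + i) = k * c + ∑ i ∈ range k, i := by
  rw [Finset.sum_add_distrib, Finset.sum_const, Finset.card_range, smul_eq_mul]

private lemma mgn_Q_ne (k : ℕ) : (∏ i ∈ range k, ((2:ℚ) ^ (k - i) - 1)) ≠ 0 := by
  refine Finset.prod_ne_zero_iff.mpr fun i hi => sub_ne_zero.mpr ?_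
  have hik : i < k := Finset.mem_range.mp hi
  exact (one_lt_pow₀ (by norm_num) (by omega)).ne'

private lemma gauss2_eq (n k : ℕ) :
    gauss2 n k = (∏ i ∈ range k, ((2:ℚ) ^ (n - i) - 1)) /
      (∏ i ∈ range k, ((2:ℚ) ^ (k - i) - 1)) := by
  rw [gauss2, Finset.prod_div_distrib]
  congr 1
  rw [← Finset.prod_range_reflect (fun j => ((2:ℚ) ^ (j + 1) - 1)) k]
  exact Finset.prod_congr rfl fun i hi => by
    have := Finset.mem_range.mp hi
    congr 2
    omega

/-- The Mixed Generalized Gaussian Number expressed via 2-binomial and 2-multinomial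
coefficients. -/
theorem MGN_eq_gauss2 (α β k₀ k₁ k₂ k₃ : ℕ) (h₀ : k₀ ≤ α) (h : k₁ + k₂ + k₃ ≤ β) :
    MGN α β k₀ k₁ k₂ k₃ =
      2 ^ (k₀ * (β - (k₁ + k₂ + k₃)) +
           k₁ * (α - k₀ + 2 * (β - (k₁ + k₂ + k₃)) + k₃) +
           k₂ * ((β - (k₁ + k₂ + k₃)) + (α - k₀))) *
        gauss2 α k₀ * (gauss2 β k₁ * gauss2 (β - k₁) k₂ * gauss2 (β - k₁ - k₂) k₃) := by
  obtain ⟨A, hA⟩ := Nat.exists_eq_add_of_le h₀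
  obtain ⟨B, hB⟩ := Nat.exists_eq_add_of_le h
  have e1 : ∏ i ∈ range k₀, ((2 ^ α - 2 ^ i : ℚ) * 2 ^ β)
      = 2 ^ (k₀ * β) * (2 ^ (∑ i ∈ range k₀, i) *
          ∏ i ∈ range k₀, ((2:ℚ) ^ (α - i) - 1)) := by
    rw [mgn_mulc]
    congr 1
    exact mgn_master k₀ α (fun i => i) (fun i => α - i) (fun i hi => by omega)
  have e2 : ∏ i ∈ range k₁, ((8 ^ β - 4 ^ β * 2 ^ i : ℚ) * 2 ^ α)
      = 2 ^ (k₁ * α) * (2 ^ (k₁ * (2 * β) + ∑ i ∈ range k₁, i) *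
          ∏ i ∈ range k₁, ((2:ℚ) ^ (β - i) - 1)) := by
    rw [mgn_mulc]
    congr 1
    have h8 : ∏ i ∈ range k₁, ((8:ℚ) ^ β - 4 ^ β * 2 ^ i)
        = ∏ i ∈ range k₁, ((2:ℚ) ^ (3 * β) - 2 ^ (2 * β + i)) :=
      Finset.prod_congr rfl fun i _ => by
        rw [show (8:ℚ) = 2 ^ 3 by norm_num, show (4:ℚ) = 2 ^ 2 by norm_num,
          ← pow_mul, ← pow_mul, ← pow_add]
    rw [h8, ← mgn_sum_shift]
    exact mgn_master k₁ (3 * β) (fun i => 2 * β + i) (fun i => β - i) (fun i hi => by omega)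
  have e3 : ∏ i ∈ range k₂, ((4 ^ β - 2 ^ (β + k₁ + i) : ℚ) * 2 ^ α)
      = 2 ^ (k₂ * α) * (2 ^ (k₂ * (β + k₁) + ∑ i ∈ range k₂, i) *
          ∏ i ∈ range k₂, ((2:ℚ) ^ (β - k₁ - i) - 1)) := by
    rw [mgn_mulc]
    congr 1
    have h4 : ∏ i ∈ range k₂, ((4:ℚ) ^ β - 2 ^ (β + k₁ + i))
        = ∏ i ∈ range k₂, ((2:ℚ) ^ (2 * β) - 2 ^ (β + k₁ + i)) :=
      Finset.prod_congr rfl fun i _ => by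
        rw [show (4:ℚ) = 2 ^ 2 by norm_num, ← pow_mul]
    rw [h4, ← mgn_sum_shift]
    exact mgn_master k₂ (2 * β) (fun i => β + k₁ + i) (fun i => β - k₁ - i)
      (fun i hi => by omega)
  have e4 : ∏ i ∈ range k₃, ((2:ℚ) ^ β - 2 ^ (k₁ + k₂ + i))
      = 2 ^ (k₃ * (k₁ + k₂) + ∑ i ∈ range k₃, i) *
          ∏ i ∈ range k₃, ((2:ℚ) ^ (β - k₁ - k₂ - i) - 1) := by
    rw [← mgn_sum_shift]
    exact mgn_master k₃ β (fun i => k₁ + k₂ + i) (fun i => β - k₁ - k₂ - i)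
      (fun i hi => by omega)
  have e5 : ∏ i ∈ range k₀, ((2:ℚ) ^ (k₀ + k₁ + k₂ + k₃) - 2 ^ (k₁ + k₂ + k₃ + i))
      = 2 ^ (k₀ * (k₁ + k₂ + k₃) + ∑ i ∈ range k₀, i) *
          ∏ i ∈ range k₀, ((2:ℚ) ^ (k₀ - i) - 1) := by
    rw [← mgn_sum_shift]
    exact mgn_master k₀ (k₀ + k₁ + k₂ + k₃) (fun i => k₁ + k₂ + k₃ + i) (fun i => k₀ - i)
      (fun i hi => by omega)
  have e6 : ∏ i ∈ range k₁, ((8 ^ k₁ - 4 ^ k₁ * 2 ^ i : ℚ) * 2 ^ (k₀ + 2 * k₂ + k₃))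
      = 2 ^ (k₁ * (k₀ + 2 * k₂ + k₃)) * (2 ^ (k₁ * (2 * k₁) + ∑ i ∈ range k₁, i) *
          ∏ i ∈ range k₁, ((2:ℚ) ^ (k₁ - i) - 1)) := by
    rw [mgn_mulc]
    congr 1
    have h8 : ∏ i ∈ range k₁, ((8:ℚ) ^ k₁ - 4 ^ k₁ * 2 ^ i)
        = ∏ i ∈ range k₁, ((2:ℚ) ^ (3 * k₁) - 2 ^ (2 * k₁ + i)) :=
      Finset.prod_congr rfl fun i _ => by
        rw [show (8:ℚ) = 2 ^ 3 by norm_num, show (4:ℚ) = 2 ^ 2 by norm_num,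
          ← pow_mul, ← pow_mul, ← pow_add]
    rw [h8, ← mgn_sum_shift]
    exact mgn_master k₁ (3 * k₁) (fun i => 2 * k₁ + i) (fun i => k₁ - i) (fun i hi => by omega)
  have e7 : ∏ i ∈ range k₂, ((4 ^ k₂ - 2 ^ (k₂ + i) : ℚ) * 2 ^ (k₀ + 2 * k₁ + k₃))
      = 2 ^ (k₂ * (k₀ + 2 * k₁ + k₃)) * (2 ^ (k₂ * k₂ + ∑ i ∈ range k₂, i) *
          ∏ i ∈ range k₂, ((2:ℚ) ^ (k₂ - i) - 1)) := by
    rw [mgn_mulc]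
    congr 1
    have h4 : ∏ i ∈ range k₂, ((4:ℚ) ^ k₂ - 2 ^ (k₂ + i))
        = ∏ i ∈ range k₂, ((2:ℚ) ^ (2 * k₂) - 2 ^ (k₂ + i)) :=
      Finset.prod_congr rfl fun i _ => by
        rw [show (4:ℚ) = 2 ^ 2 by norm_num, ← pow_mul]
    rw [h4, ← mgn_sum_shift]
    exact mgn_master k₂ (2 * k₂) (fun i => k₂ + i) (fun i => k₂ - i) (fun i hi => by omega)
  have e8 : ∏ i ∈ range k₃, ((2:ℚ) ^ (k₁ + k₂ + k₃) - 2 ^ (k₁ + k₂ + i))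
      = 2 ^ (k₃ * (k₁ + k₂) + ∑ i ∈ range k₃, i) *
          ∏ i ∈ range k₃, ((2:ℚ) ^ (k₃ - i) - 1) := by
    rw [← mgn_sum_shift]
    exact mgn_master k₃ (k₁ + k₂ + k₃) (fun i => k₁ + k₂ + i) (fun i => k₃ - i)
      (fun i hi => by omega)
  rw [MGN, e1, e2, e3, e4, e5, e6, e7, e8]
  simp only [gauss2_eq]
  subst hA
  subst hB
  simp only [Nat.add_sub_cancel_left]
  have H0 := mgn_Q_ne k₀
  have H1 := mgn_Q_ne k₁
  have H2 := mgn_Q_ne k₂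
  have H3 := mgn_Q_ne k₃
  field_simp
  ring
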